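/- Under the optimal-restocking (OR) policy, the expected cost-to-go is non-increasing in the residual capacity: for every previous customer i, every list L of remaining distinct customers, and all residual capacities q1, q2 with 0 ≤ q1 ≤ q2 ≤ Q, one has F(i, L, q1) ≥ F(i, L, q2), and likewise H(L, q1) ≥ H(L, q2) for nonempty L. -/
import Mathlib


open ENNReal

/-- `Ψ(s, q) = max(⌈(s − q)/Q⌉, 0)`: the number of restocking trips needed to serve a
demand of `s` units from residual capacity `q`, with vehicle capacity `Q`. -/
noncomputable def psi (Q s q : ℕ) : ℕ := (⌈((s : ℚ) - (q : ℚ)) / (Q : ℚ)⌉).toNat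

/-- The optimal-restocking (OR) expected cost-to-go `F(i, L, q)` after serving customer
`i`, with remaining customers `L` and residual capacity `q`:
`F(i, (), q) = 0` and `F(i, j :: L', q) = min{ H(j :: L', q), c^P_{i,j} + H(j :: L', Q) }`,
where `H(j :: L', q) = ∑_s [ c^F_j Ψ(s,q) + F(j, L', Ψ(s,q)Q + q − s) ] ρ_j(s)`. -/
noncomputable def orF {N : Type*} (ρ : N → PMF ℕ) (Q : ℕ) (cF : N → ℝ) (cP : N → N → ℝ) :
    N → List N → ℕ → ℝ≥0∞
  | _, [], _ => 0
  | i, j :: L', q =>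
    min
      (∑' s : ℕ, (ENNReal.ofReal (cF j) * (psi Q s q : ℝ≥0∞)
          + orF ρ Q cF cP j L' (psi Q s q * Q + q - s)) * ρ j s)
      (ENNReal.ofReal (cP i j) +
        ∑' s : ℕ, (ENNReal.ofReal (cF j) * (psi Q s Q : ℝ≥0∞)
          + orF ρ Q cF cP j L' (psi Q s Q * Q + Q - s)) * ρ j s)

/-- The OR cost-to-go `H(j :: L', q)` of proceeding directly to customer `j` with residual
capacity `q`, when the remaining customers after `j` are `L'`. -/
noncomputable def orH {N : Type*} (ρ : N → PMF ℕ) (Q : ℕ) (cF : N → ℝ) (cP : N → N → ℝ)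
    (j : N) (L' : List N) (q : ℕ) : ℝ≥0∞ :=
  ∑' s : ℕ, (ENNReal.ofReal (cF j) * (psi Q s q : ℝ≥0∞)
      + orF ρ Q cF cP j L' (psi Q s q * Q + q - s)) * ρ j s

lemma psi_anti {Q : ℕ} (hQ : 1 ≤ Q) (s : ℕ) {q1 q2 : ℕ} (h : q1 ≤ q2) :
    psi Q s q2 ≤ psi Q s q1 := by
  have hQ' : (0:ℚ) < Q := by exact_mod_cast hQ
  apply Int.toNat_le_toNat
  apply Int.ceil_le_ceil
  gcongr

lemma psi_ge {Q : ℕ} (hQ : 1 ≤ Q) (s q : ℕ) : s ≤ psi Q s q * Q + q := by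
  have hQ' : (0:ℚ) < Q := by exact_mod_cast hQ
  rcases le_or_gt s q with h | h
  · omega
  · have hx : ((s:ℚ) - q) / Q ≤ ((⌈((s : ℚ) - (q : ℚ)) / (Q : ℚ)⌉).toNat : ℚ) := by
      refine (Int.le_ceil _).trans ?_
      exact_mod_cast Int.self_le_toNat _
    have h2 : ((s:ℚ) - q) ≤ (psi Q s q : ℚ) * Q := by
      rw [div_le_iff₀ hQ'] at hx
      simpa [psi] using hx
    have h3 : (s:ℚ) ≤ (psi Q s q : ℚ) * Q + q := by linarith
    exact_mod_cast h3

lemma psi_res_le {Q : ℕ} (hQ : 1 ≤ Q) (s q : ℕ) (hqQ : q ≤ Q) :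
    psi Q s q * Q + q - s ≤ Q := by
  have hQ' : (0:ℚ) < Q := by exact_mod_cast hQ
  suffices h : psi Q s q * Q + q ≤ Q + s by omega
  rcases le_or_gt ⌈((s : ℚ) - (q : ℚ)) / (Q : ℚ)⌉ 0 with h0 | h0
  · have h1 : psi Q s q = 0 := by simpa [psi] using h0
    rw [h1]; omega
  · have hpsi : (psi Q s q : ℚ) = (⌈((s : ℚ) - (q : ℚ)) / (Q : ℚ)⌉ : ℚ) := by
      simp only [psi]
      exact_mod_cast Int.toNat_of_nonneg h0.le
    have hc : (⌈((s : ℚ) - (q : ℚ)) / (Q : ℚ)⌉ : ℚ) < ((s:ℚ) - q) / Q + 1 :=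
      Int.ceil_lt_add_one _
    have h4 : (psi Q s q : ℚ) * Q < (((s:ℚ) - q) / Q + 1) * Q := by
      rw [hpsi]; exact mul_lt_mul_of_pos_right hc hQ'
    rw [div_add' _ _ _ hQ'.ne', div_mul_cancel₀ _ hQ'.ne'] at h4
    have h2 : ((psi Q s q * Q + q : ℕ) : ℚ) < ((Q + s : ℕ) : ℚ) := by push_cast; linarith
    exact_mod_cast h2.le

lemma orF_nil' {N : Type*} (ρ : N → PMF ℕ) (Q : ℕ) (cF : N → ℝ) (cP : N → N → ℝ)
    (i : N) (q : ℕ) : orF ρ Q cF cP i [] q = 0 := rfl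

lemma orF_cons' {N : Type*} (ρ : N → PMF ℕ) (Q : ℕ) (cF : N → ℝ) (cP : N → N → ℝ)
    (i j : N) (L' : List N) (q : ℕ) :
    orF ρ Q cF cP i (j :: L') q =
      min (orH ρ Q cF cP j L' q)
        (ENNReal.ofReal (cP i j) + orH ρ Q cF cP j L' Q) := rfl

lemma or_mono {N : Type*} (ρ : N → PMF ℕ) (Q : ℕ) (hQ : 1 ≤ Q)
    (cF : N → ℝ) (cP : N → N → ℝ) (hcPF : ∀ a b, cP a b ≤ cF a) (L : List N) :
    (∀ i q1 q2, q1 ≤ q2 → q2 ≤ Q →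
      orF ρ Q cF cP i L q2 ≤ orF ρ Q cF cP i L q1) ∧
    (∀ j q1 q2, q1 ≤ q2 → q2 ≤ Q →
      orH ρ Q cF cP j L q2 ≤ orH ρ Q cF cP j L q1) := by
  induction L with
  | nil =>
    constructor
    · intro i q1 q2 _ _; simp [orF_nil']
    · intro j q1 q2 h12 h2Q
      unfold orH
      refine ENNReal.tsum_le_tsum fun s => ?_
      refine mul_le_mul_left ?_ _
      rw [orF_nil', orF_nil', add_zero, add_zero]
      exact mul_le_mul_right (Nat.cast_le.mpr (psi_anti hQ s h12)) _
  | cons j' L' ih =>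
    have Fmono : ∀ i q1 q2, q1 ≤ q2 → q2 ≤ Q →
        orF ρ Q cF cP i (j' :: L') q2 ≤ orF ρ Q cF cP i (j' :: L') q1 := by
      intro i q1 q2 h12 h2Q
      rw [orF_cons', orF_cons']
      exact min_le_min (ih.2 j' q1 q2 h12 h2Q) le_rfl
    refine ⟨Fmono, ?_⟩
    intro j q1 q2 h12 h2Q
    have h1Q : q1 ≤ Q := h12.trans h2Q
    -- the gap lemma: orF j (j'::L') a ≤ cF j + orF j (j'::L') b for a,b ≤ Q
    have gap : ∀ a b, a ≤ Q → b ≤ Q →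
        orF ρ Q cF cP j (j' :: L') a ≤
          ENNReal.ofReal (cF j) + orF ρ Q cF cP j (j' :: L') b := by
      intro a b ha hb
      have h1 : orF ρ Q cF cP j (j' :: L') a ≤ orF ρ Q cF cP j (j' :: L') 0 :=
        Fmono j 0 a (Nat.zero_le _) ha
      have h2 : orF ρ Q cF cP j (j' :: L') 0 ≤
          ENNReal.ofReal (cP j j') + orH ρ Q cF cP j' L' Q := by
        rw [orF_cons']; exact min_le_right _ _
      have h3 : orF ρ Q cF cP j (j' :: L') Q = orH ρ Q cF cP j' L' Q := by
        rw [orF_cons']; exact min_eq_left le_add_self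
      have h4 : orF ρ Q cF cP j (j' :: L') Q ≤ orF ρ Q cF cP j (j' :: L') b :=
        Fmono j b Q hb le_rfl
      calc orF ρ Q cF cP j (j' :: L') a
          ≤ ENNReal.ofReal (cP j j') + orH ρ Q cF cP j' L' Q := h1.trans h2
        _ ≤ ENNReal.ofReal (cF j) + orF ρ Q cF cP j (j' :: L') b := by
            rw [← h3]
            exact add_le_add (ENNReal.ofReal_le_ofReal (hcPF j j')) h4
    unfold orH
    refine ENNReal.tsum_le_tsum fun s => ?_
    refine mul_le_mul_left ?_ _
    set k1 := psi Q s q1 with hk1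
    set k2 := psi Q s q2 with hk2
    have hk : k2 ≤ k1 := psi_anti hQ s h12
    have hr1 : k1 * Q + q1 - s ≤ Q := psi_res_le hQ s q1 h1Q
    have hr2 : k2 * Q + q2 - s ≤ Q := psi_res_le hQ s q2 h2Q
    rcases Nat.eq_or_lt_of_le hk with heq | hlt
    · -- equal number of restocks
      have hres : k2 * Q + q1 - s ≤ k2 * Q + q2 - s := by omega
      rw [← heq]
      exact add_le_add le_rfl (Fmono j _ _ hres hr2)
    · -- k2 + 1 ≤ k1
      calc ENNReal.ofReal (cF j) * (k2 : ℝ≥0∞) + orF ρ Q cF cP j (j' :: L') (k2 * Q + q2 - s)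
          ≤ ENNReal.ofReal (cF j) * (k2 : ℝ≥0∞) +
            (ENNReal.ofReal (cF j) + orF ρ Q cF cP j (j' :: L') (k1 * Q + q1 - s)) :=
            add_le_add le_rfl (gap _ _ hr2 hr1)
        _ = ENNReal.ofReal (cF j) * ((k2 : ℝ≥0∞) + 1) +
            orF ρ Q cF cP j (j' :: L') (k1 * Q + q1 - s) := by ring
        _ ≤ ENNReal.ofReal (cF j) * (k1 : ℝ≥0∞) +
            orF ρ Q cF cP j (j' :: L') (k1 * Q + q1 - s) := by
            refine add_le_add (mul_le_mul_right ?_ _) le_rfl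
            have : ((k2 + 1 : ℕ) : ℝ≥0∞) ≤ (k1 : ℝ≥0∞) := Nat.cast_le.mpr hlt
            simpa using this

/-- under the OR policy, the expected cost-to-go is non-increasing in the
residual capacity: `F(i, L, q₁) ≥ F(i, L, q₂)` for `0 ≤ q₁ ≤ q₂ ≤ Q`, and likewise
`H(L, q₁) ≥ H(L, q₂)` for nonempty `L`. -/
theorem or_cost_to_go_monotone
    {N : Type*} (ρ : N → PMF ℕ) (Q : ℕ) (hQ : 1 ≤ Q)
    (hmean : ∀ i, ∑' s : ℕ, (s : ℝ≥0∞) * ρ i s ≠ ⊤)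
    (bP bF : ℝ) (hbP : 0 ≤ bP) (hbPF : bP ≤ bF)
    (c0 : N → ℝ) (c : N → N → ℝ)
    (hc0 : ∀ i, 0 ≤ c0 i) (hc : ∀ i j, 0 ≤ c i j) (hsymm : ∀ i j, c i j = c j i)
    (htri1 : ∀ i j, c0 j ≤ c0 i + c i j)
    (htri2 : ∀ i j, c i j ≤ c0 i + c0 j)
    (htri3 : ∀ i j k, c i k ≤ c i j + c j k)
    (i : N) (L : List N) (hL : (i :: L).Nodup)
    (q1 q2 : ℕ) (h12 : q1 ≤ q2) (h2Q : q2 ≤ Q) :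
    orF ρ Q (fun a => bF + 2 * c0 a) (fun a b => bP + c0 a + c0 b - c a b) i L q2
      ≤ orF ρ Q (fun a => bF + 2 * c0 a) (fun a b => bP + c0 a + c0 b - c a b) i L q1 ∧
    (∀ (j : N) (L' : List N), L = j :: L' →
      orH ρ Q (fun a => bF + 2 * c0 a) (fun a b => bP + c0 a + c0 b - c a b) j L' q2
        ≤ orH ρ Q (fun a => bF + 2 * c0 a) (fun a b => bP + c0 a + c0 b - c a b) j L' q1) := by
  have hcPF : ∀ a b, (fun a b => bP + c0 a + c0 b - c a b) a b ≤ (fun a => bF + 2 * c0 a) a := by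
    intro a b
    have := htri1 a b
    simp only
    linarith
  refine ⟨(or_mono ρ Q hQ _ _ hcPF L).1 i q1 q2 h12 h2Q, ?_⟩
  intro j L' hE
  subst hE
  exact (or_mono ρ Q hQ _ _ hcPF L').2 j q1 q2 h12 h2Q
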